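/- Let (X,d) be a locally compact metric space, (f_n) a sequence of isometries of X converging pointwise to a map f, and F = {f_n⁻¹ : n ∈ ℕ}. Then f(X) = K(F), where K(F) is the set of points of X whose F-orbit is relatively compact. -/
import Mathlib


open Function Set Metric Topology Filter

theorem stmt_6 {X : Type*} [MetricSpace X] [LocallyCompactSpace X]
    (fn : ℕ → X ≃ᵢ X) (f : X → X)
    (hlim : ∀ x, Tendsto (fun n => fn n x) atTop (nhds (f x))) :
    Set.range f =
      {y : X | IsCompact (closure (Set.range fun n => (fn n).symm y))} := by
  ext y
  constructor
  · rintro ⟨x, rfl⟩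
    -- (fn n).symm (f x) → x
    have hconv : Tendsto (fun n => (fn n).symm (f x)) atTop (𝓝 x) := by
      rw [tendsto_iff_dist_tendsto_zero]
      have : ∀ n, dist ((fn n).symm (f x)) x = dist (f x) (fn n x) := by
        intro n
        have := (fn n).symm.isometry.dist_eq (f x) (fn n x)
        simpa using this
      simp only [this]
      have : Tendsto (fun n => dist (f x) (fn n x)) atTop (𝓝 (dist (f x) (f x))) :=
        tendsto_const_nhds.dist (hlim x)
      simpa using this
    have hins := hconv.isCompact_insert_range
    exact hins.of_isClosed_subset isClosed_closure
      (closure_minimal (subset_insert _ _) hins.isClosed)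
  · intro hK
    obtain ⟨x, -, φ, hφ, hx⟩ := hK.tendsto_subseq
      (x := fun n => (fn n).symm y) (fun n => subset_closure (mem_range_self n))
    refine ⟨x, ?_⟩
    have h1 : Tendsto (fun k => fn (φ k) x) atTop (𝓝 (f x)) :=
      (hlim x).comp hφ.tendsto_atTop
    have h2 : Tendsto (fun k => fn (φ k) x) atTop (𝓝 y) := by
      rw [tendsto_iff_dist_tendsto_zero]
      have heq : ∀ k, dist (fn (φ k) x) y = dist x ((fn (φ k)).symm y) := by
        intro k
        have := (fn (φ k)).symm.isometry.dist_eq (fn (φ k) x) y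
        simpa using this.symm
      simp only [heq]
      have : Tendsto (fun k => dist x ((fn (φ k)).symm y)) atTop (𝓝 (dist x x)) :=
        tendsto_const_nhds.dist hx
      simpa using this
    exact tendsto_nhds_unique h1 h2
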